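/- arXiv:math-ph/0602064 — 4 statements merged into one kernel-verified Lean document; each statement's English description precedes it below -/
import Mathlib

section
/- Let c > 0 and p = c² - 1, and suppose w ≠ 0, w² ≠ c², z = w³/(w²-c²), and ξ = w + p/w. Then with a = 2c - 1/c, ξ satisfies the modified Pastur equation ξ³ - z ξ² + (1-a²) ξ + a² z + (c²-1)³/(c² z) = 0 (equivalently, z·(ξ³ - zξ² + (1-a²)ξ + a²z) + (c²-1)³/c² = 0) whenever z ≠ 0. -/
set_option maxHeartbeats 2000000 in
private lemma pastur_frac_eq (c : ℝ) (w z : ℂ)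
    (hw : w ≠ 0) (hz : z ≠ 0) (hcne : (c:ℂ) ≠ 0) :
    (w + ((c : ℂ) ^ 2 - 1) / w) ^ 3 - z * (w + ((c : ℂ) ^ 2 - 1) / w) ^ 2
      + (1 - (2 * (c : ℂ) - 1 / (c : ℂ)) ^ 2) * (w + ((c : ℂ) ^ 2 - 1) / w)
      + (2 * (c : ℂ) - 1 / (c : ℂ)) ^ 2 * z
      + ((c : ℂ) ^ 2 - 1) ^ 3 / ((c : ℂ) ^ 2 * z)
      = ((c:ℂ)^4*z*(w^2+((c:ℂ)^2-1))^3 - (c:ℂ)^4*z^2*w*(w^2+((c:ℂ)^2-1))^2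
      + ((c:ℂ)^2-(2*(c:ℂ)^2-1)^2)*(c:ℂ)^2*z*w^2*(w^2+((c:ℂ)^2-1))
      + (c:ℂ)^2*(2*(c:ℂ)^2-1)^2*z^2*w^3 + (c:ℂ)^2*((c:ℂ)^2-1)^3*w^3)
        / (w^3*(c:ℂ)^4*z) := by
  have hw3 : w^3 ≠ 0 := pow_ne_zero 3 hw
  have hw2 : w^2 ≠ 0 := pow_ne_zero 2 hw
  have hc2 : (c:ℂ)^2 ≠ 0 := pow_ne_zero 2 hcne
  have e1 : w + ((c : ℂ) ^ 2 - 1) / w = (w^2 + ((c:ℂ)^2-1))/w := by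
    rw [eq_div_iff hw, add_mul, div_mul_cancel₀ _ hw]; ring
  have e2 : 2 * (c : ℂ) - 1 / (c : ℂ) = (2*(c:ℂ)^2-1)/(c:ℂ) := by
    rw [eq_div_iff hcne, sub_mul, div_mul_cancel₀ _ hcne]; ring
  have e3 : 1 - (2*(c:ℂ)^2-1)^2/(c:ℂ)^2 = ((c:ℂ)^2 - (2*(c:ℂ)^2-1)^2)/(c:ℂ)^2 := by
    rw [eq_div_iff hc2, sub_mul, div_mul_cancel₀ _ hc2]; ring
  rw [e1, e2, div_pow, div_pow, div_pow, mul_div_assoc' z, e3, div_mul_div_comm,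
    div_sub_div _ _ hw3 hw2,
    div_add_div _ _ (mul_ne_zero hw3 hw2) (mul_ne_zero hc2 hw),
    div_mul_eq_mul_div,
    div_add_div _ _ (mul_ne_zero (mul_ne_zero hw3 hw2) (mul_ne_zero hc2 hw)) hc2,
    div_add_div _ _ (mul_ne_zero (mul_ne_zero (mul_ne_zero hw3 hw2) (mul_ne_zero hc2 hw)) hc2)
      (mul_ne_zero hc2 hz),
    div_eq_div_iff (mul_ne_zero (mul_ne_zero (mul_ne_zero (mul_ne_zero hw3 hw2)
        (mul_ne_zero hc2 hw)) hc2) (mul_ne_zero hc2 hz))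
      (mul_ne_zero (mul_ne_zero hw3 (pow_ne_zero 4 hcne)) hz)]
  ring

/-- If `z = w³/(w²-c²)` and `ξ = w + (c²-1)/w`, then with `a = 2c - 1/c`,
`ξ` satisfies the modified Pastur equation. -/
theorem modified_pastur_equation (c : ℝ) (hc : 0 < c) (w z ξ a : ℂ)
    (hw : w ≠ 0) (hw2 : w ^ 2 ≠ (c : ℂ) ^ 2) (hz : z ≠ 0)
    (hzw : z = w ^ 3 / (w ^ 2 - (c : ℂ) ^ 2))
    (hxi : ξ = w + ((c : ℂ) ^ 2 - 1) / w)
    (hac : a = 2 * (c : ℂ) - 1 / (c : ℂ)) :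
    ξ ^ 3 - z * ξ ^ 2 + (1 - a ^ 2) * ξ + a ^ 2 * z
      + ((c : ℂ) ^ 2 - 1) ^ 3 / ((c : ℂ) ^ 2 * z) = 0 := by
  have hcne : (c : ℂ) ≠ 0 := by exact_mod_cast hc.ne'
  have hd : w ^ 2 - (c : ℂ) ^ 2 ≠ 0 := sub_ne_zero.mpr hw2
  have hzz : z * (w ^ 2 - (c : ℂ) ^ 2) = w ^ 3 := by rw [hzw]; field_simp
  have key : (c:ℂ)^4*z*(w^2+((c:ℂ)^2-1))^3 - (c:ℂ)^4*z^2*w*(w^2+((c:ℂ)^2-1))^2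
      + ((c:ℂ)^2-(2*(c:ℂ)^2-1)^2)*(c:ℂ)^2*z*w^2*(w^2+((c:ℂ)^2-1))
      + (c:ℂ)^2*(2*(c:ℂ)^2-1)^2*z^2*w^3 + (c:ℂ)^2*((c:ℂ)^2-1)^3*w^3 = 0 := by
    linear_combination (w*(c:ℂ)^2*((c:ℂ)^2-1)^2*z - w^3*(c:ℂ)^4*z
      - (c:ℂ)^2*((c:ℂ)^2-1)^3) * hzz
  subst hxi hac
  rw [pastur_frac_eq c w z hw hz hcne, key, zero_div]
end

section
/- Suppose f₁, g₁ are analytic functions in a neighborhood of 0 satisfying f₁(z)g₁(z) = 1/9 and f₁(z)³ - c² + (2/27)z² + g₁(z)³ z⁴ = 0 with f₁(0) = c^{2/3}, c > 0. Then the function w(z) = -z^{1/3} f₁(z) - z^{5/3} g₁(z) + z/3 (principal branches, z ∉ (-∞,0]) satisfies z·(w(z)² - c²) = w(z)³, i.e., it solves the equation z = w³/(w²-c²). -/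
/-- If `f₁ g₁ = 1/9` and `f₁³ - c² + (2/27)z² + g₁³ z⁴ = 0` near `0`, then
`w(z) = -z^{1/3} f₁(z) - z^{5/3} g₁(z) + z/3` (principal branches) satisfies
`z (w² - c²) = w³` off the cut `(-∞,0]`. -/
theorem w_solves_equation (c : ℝ) (hc : 0 < c) (U : Set ℂ) (hU : U ∈ nhds (0 : ℂ))
    (f₁ g₁ : ℂ → ℂ) (hf : AnalyticOn ℂ f₁ U) (hg : AnalyticOn ℂ g₁ U)
    (hf0 : f₁ 0 = ((c ^ ((2 : ℝ) / 3) : ℝ) : ℂ))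
    (h1 : ∀ z ∈ U, f₁ z * g₁ z = 1 / 9)
    (h2 : ∀ z ∈ U, f₁ z ^ 3 - (c : ℂ) ^ 2 + (2 / 27) * z ^ 2 + g₁ z ^ 3 * z ^ 4 = 0) :
    ∀ z ∈ U, ¬(z.im = 0 ∧ z.re ≤ 0) →
      z * ((-(z ^ ((1 : ℂ) / 3)) * f₁ z - z ^ ((5 : ℂ) / 3) * g₁ z + z / 3) ^ 2
            - (c : ℂ) ^ 2)
        = (-(z ^ ((1 : ℂ) / 3)) * f₁ z - z ^ ((5 : ℂ) / 3) * g₁ z + z / 3) ^ 3 := by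
  intro z hzU hcut
  have hz0 : z ≠ 0 := by
    rintro rfl
    exact hcut ⟨rfl, le_refl 0⟩
  set a : ℂ := z ^ ((1 : ℂ) / 3) with ha
  have h3 : a ^ 3 = z := by
    rw [ha, show (z ^ ((1:ℂ)/3)) ^ 3 = z ^ ((1:ℂ)/3) * z ^ ((1:ℂ)/3) * z ^ ((1:ℂ)/3) by ring,
      ← Complex.cpow_add _ _ hz0, ← Complex.cpow_add _ _ hz0]
    norm_num
  have h5 : z ^ ((5 : ℂ) / 3) = a ^ 5 := by
    rw [show (5:ℂ)/3 = 1/3 + 1/3 + 1/3 + 1/3 + 1/3 by norm_num,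
      Complex.cpow_add _ _ hz0, Complex.cpow_add _ _ hz0, Complex.cpow_add _ _ hz0,
      Complex.cpow_add _ _ hz0, ← ha]
    ring
  have h1' := h1 z hzU
  have h2' := h2 z hzU
  rw [h5]
  rw [← h3] at h1' h2' ⊢
  linear_combination (3 * a ^ 6 * (a * f₁ (a ^ 3) + a ^ 5 * g₁ (a ^ 3))) * h1'
    + a ^ 3 * h2'
end

section
/- With notation as above (w_k roots of w³ - zw² + c²z = 0, z ≠ 0, p = c²-1, ξ_k = w_k + p/w_k, a = 2c - 1/c), one has ξ₁ξ₂ + ξ₁ξ₃ + ξ₂ξ₃ = 1 - a². -/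
/-- With `ξₖ = wₖ + (c²-1)/wₖ` and `a = 2c - 1/c`, the second elementary symmetric
function of the `ξₖ` equals `1 - a²`. -/
theorem xi_second_symmetric (c : ℝ) (hc : 0 < c) (z w₁ w₂ w₃ : ℂ) (hz : z ≠ 0)
    (hw₁ : w₁ ≠ 0) (hw₂ : w₂ ≠ 0) (hw₃ : w₃ ≠ 0)
    (hroots : ∀ w : ℂ, w ^ 3 - z * w ^ 2 + (c : ℂ) ^ 2 * z
      = (w - w₁) * (w - w₂) * (w - w₃)) :
    (w₁ + ((c : ℂ) ^ 2 - 1) / w₁) * (w₂ + ((c : ℂ) ^ 2 - 1) / w₂)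
      + (w₁ + ((c : ℂ) ^ 2 - 1) / w₁) * (w₃ + ((c : ℂ) ^ 2 - 1) / w₃)
      + (w₂ + ((c : ℂ) ^ 2 - 1) / w₂) * (w₃ + ((c : ℂ) ^ 2 - 1) / w₃)
      = 1 - (2 * (c : ℂ) - 1 / (c : ℂ)) ^ 2 := by
  have hcne : (c : ℂ) ≠ 0 := by exact_mod_cast hc.ne'
  set p : ℂ := (c : ℂ) ^ 2 - 1 with hp
  have h1 : w₁ + w₂ + w₃ = z := by
    linear_combination (hroots 1) / 2 + (hroots (-1)) / 2 - hroots 0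
  have h2 : w₁ * w₂ + w₁ * w₃ + w₂ * w₃ = 0 := by
    linear_combination (hroots (-1)) / 2 - (hroots 1) / 2
  have h3 : w₁ * w₂ * w₃ = -(c : ℂ) ^ 2 * z := by
    linear_combination hroots 0
  have hne : w₁ * w₂ * w₃ ≠ 0 := mul_ne_zero (mul_ne_zero hw₁ hw₂) hw₃
  have hξ : ((w₁ + p / w₁) * (w₂ + p / w₂)
      + (w₁ + p / w₁) * (w₃ + p / w₃)
      + (w₂ + p / w₂) * (w₃ + p / w₃)) * (w₁ * w₂ * w₃)
      = (w₁ ^ 2 + p) * (w₂ ^ 2 + p) * w₃ + (w₁ ^ 2 + p) * (w₃ ^ 2 + p) * w₂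
        + (w₂ ^ 2 + p) * (w₃ ^ 2 + p) * w₁ := by
    field_simp
  have hN : (w₁ ^ 2 + p) * (w₂ ^ 2 + p) * w₃ + (w₁ ^ 2 + p) * (w₃ ^ 2 + p) * w₂
      + (w₂ ^ 2 + p) * (w₃ ^ 2 + p) * w₁ = z * p * (3 * (c : ℂ) ^ 2 + p) := by
    linear_combination (w₁ * w₂ * w₃ + p * (w₁ + w₂ + w₃)) * h2
      + (-3 * p) * h3 + p ^ 2 * h1
  have key := hξ.trans hN
  apply mul_right_cancel₀ hne
  rw [key, h3]
  field_simp
  ring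
end

section
/- With the same notation, ξ₁ξ₂ξ₃ = -a²z - (c²-1)³/(c²z). Consequently ξ₁, ξ₂, ξ₃ are exactly the three roots of the modified Pastur equation ξ³ - zξ² + (1-a²)ξ + a²z + (c²-1)³/(c²z) = 0. -/
/-- With `ξₖ = wₖ + (c²-1)/wₖ` and `a = 2c - 1/c`, one has
`ξ₁ξ₂ξ₃ = -a²z - (c²-1)³/(c²z)`; consequently `ξ₁,ξ₂,ξ₃` are exactly the roots of
the modified Pastur equation. -/
theorem xi_product_and_roots (c : ℝ) (hc : 0 < c) (z w₁ w₂ w₃ : ℂ) (hz : z ≠ 0)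
    (hw₁ : w₁ ≠ 0) (hw₂ : w₂ ≠ 0) (hw₃ : w₃ ≠ 0)
    (hroots : ∀ w : ℂ, w ^ 3 - z * w ^ 2 + (c : ℂ) ^ 2 * z
      = (w - w₁) * (w - w₂) * (w - w₃)) :
    (w₁ + ((c : ℂ) ^ 2 - 1) / w₁) * (w₂ + ((c : ℂ) ^ 2 - 1) / w₂)
        * (w₃ + ((c : ℂ) ^ 2 - 1) / w₃)
      = -(2 * (c : ℂ) - 1 / (c : ℂ)) ^ 2 * z - ((c : ℂ) ^ 2 - 1) ^ 3 / ((c : ℂ) ^ 2 * z) ∧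
    ∀ x : ℂ,
      x ^ 3 - z * x ^ 2 + (1 - (2 * (c : ℂ) - 1 / (c : ℂ)) ^ 2) * x
          + (2 * (c : ℂ) - 1 / (c : ℂ)) ^ 2 * z
          + ((c : ℂ) ^ 2 - 1) ^ 3 / ((c : ℂ) ^ 2 * z)
        = (x - (w₁ + ((c : ℂ) ^ 2 - 1) / w₁)) * (x - (w₂ + ((c : ℂ) ^ 2 - 1) / w₂))
            * (x - (w₃ + ((c : ℂ) ^ 2 - 1) / w₃)) := by
  have hc0 : (c : ℂ) ≠ 0 := by
    exact_mod_cast (ne_of_gt hc)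
  set p : ℂ := (c : ℂ) ^ 2 - 1 with hp
  have h0 := hroots 0
  have h1 := hroots 1
  have hm1 := hroots (-1)
  -- Vieta
  have he3 : w₁ * w₂ * w₃ = -(c : ℂ) ^ 2 * z := by linear_combination h0
  have he1 : w₁ + w₂ + w₃ = z := by linear_combination (h1 + hm1) / 2 - h0
  have he2 : w₁ * w₂ + w₁ * w₃ + w₂ * w₃ = 0 := by
    linear_combination (hm1 - h1) / 2
  -- product of the ξ's (numerators)
  have key : (w₁ ^ 2 + p) * (w₂ ^ 2 + p) * (w₃ ^ 2 + p)
      = (c : ℂ) ^ 4 * z ^ 2 + p * (2 * (c : ℂ) ^ 2 * z ^ 2) + p ^ 2 * z ^ 2 + p ^ 3 := by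
    have expand : (w₁ ^ 2 + p) * (w₂ ^ 2 + p) * (w₃ ^ 2 + p)
        = (w₁ * w₂ * w₃) ^ 2
          + p * ((w₁ * w₂ + w₁ * w₃ + w₂ * w₃) ^ 2
            - 2 * (w₁ + w₂ + w₃) * (w₁ * w₂ * w₃))
          + p ^ 2 * ((w₁ + w₂ + w₃) ^ 2 - 2 * (w₁ * w₂ + w₁ * w₃ + w₂ * w₃))
          + p ^ 3 := by ring
    rw [he1, he2, he3] at expand
    linear_combination expand
  have hx3 : (w₁ + p / w₁) * (w₂ + p / w₂) * (w₃ + p / w₃)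
      = -(2 * (c : ℂ) - 1 / (c : ℂ)) ^ 2 * z - p ^ 3 / ((c : ℂ) ^ 2 * z) := by
    have prod_eq : (w₁ + p / w₁) * (w₂ + p / w₂) * (w₃ + p / w₃)
        = ((w₁ ^ 2 + p) * (w₂ ^ 2 + p) * (w₃ ^ 2 + p)) / (w₁ * w₂ * w₃) := by
      field_simp
    rw [prod_eq, key, he3]
    field_simp
    ring
  refine ⟨hx3, fun x => ?_⟩
  have hx1 : (w₁ + p / w₁) + (w₂ + p / w₂) + (w₃ + p / w₃) = z := by
    have e : (w₁ + p / w₁) + (w₂ + p / w₂) + (w₃ + p / w₃)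
        = ((w₁ + w₂ + w₃) * (w₁ * w₂ * w₃) + p * (w₁ * w₂ + w₁ * w₃ + w₂ * w₃))
          / (w₁ * w₂ * w₃) := by
      field_simp
      ring
    rw [e, he1, he2, he3]
    field_simp
    ring
  have hx2 : (w₁ + p / w₁) * (w₂ + p / w₂) + (w₁ + p / w₁) * (w₃ + p / w₃)
      + (w₂ + p / w₂) * (w₃ + p / w₃) = 1 - (2 * (c : ℂ) - 1 / (c : ℂ)) ^ 2 := by
    have e : (w₁ + p / w₁) * (w₂ + p / w₂) + (w₁ + p / w₁) * (w₃ + p / w₃)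
        + (w₂ + p / w₂) * (w₃ + p / w₃)
        = ((w₁ * w₂ + w₁ * w₃ + w₂ * w₃) * (w₁ * w₂ * w₃)
          + p * ((w₁ + w₂ + w₃) * (w₁ * w₂ + w₁ * w₃ + w₂ * w₃) - 3 * (w₁ * w₂ * w₃))
          + p ^ 2 * (w₁ + w₂ + w₃)) / (w₁ * w₂ * w₃) := by
      field_simp
      ring
    rw [e, he1, he2, he3]
    field_simp
    ring
  calc x ^ 3 - z * x ^ 2 + (1 - (2 * (c : ℂ) - 1 / (c : ℂ)) ^ 2) * x
          + (2 * (c : ℂ) - 1 / (c : ℂ)) ^ 2 * z + p ^ 3 / ((c : ℂ) ^ 2 * z)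
      = x ^ 3 - ((w₁ + p / w₁) + (w₂ + p / w₂) + (w₃ + p / w₃)) * x ^ 2
        + ((w₁ + p / w₁) * (w₂ + p / w₂) + (w₁ + p / w₁) * (w₃ + p / w₃)
          + (w₂ + p / w₂) * (w₃ + p / w₃)) * x
        - (w₁ + p / w₁) * (w₂ + p / w₂) * (w₃ + p / w₃) := by
        rw [hx1, hx2, hx3]; ring
    _ = (x - (w₁ + p / w₁)) * (x - (w₂ + p / w₂)) * (x - (w₃ + p / w₃)) := by ring
end
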